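/- Let s be a complex number with Im s > 0 (so 0 < arg s < π). Then Σ_{k=0}^∞ e^{2πiks} / Γ*(s e^{−πi}) = Γ*(s); equivalently, 1 / ( (1 − e^{2πis}) Γ*(s e^{−πi}) ) = Γ*(s), where s e^{−πi} has principal argument arg s − π ∈ (−π, 0). -/

import Mathlib

set_option maxHeartbeats 1000000


open Complex Real

noncomputable section

/-- The scaled gamma function `Γ*(z) = Γ(z)/(√(2π) z^(z-1/2) e^(-z))`. -/
def GammaStar (z : ℂ) : ℂ :=
  Complex.Gamma z /
    ((Real.sqrt (2 * Real.pi) : ℂ) * z ^ (z - 1 / 2) * Complex.exp (-z))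

lemma key (s : ℂ) (hs : 0 < s.im) :
    GammaStar s * ((1 - Complex.exp (2 * (Real.pi : ℂ) * Complex.I * s)) * GammaStar (-s)) = 1 := by
  have hs0 : s ≠ 0 := by intro h; rw [h] at hs; simp at hs
  have hsim : s.im ≠ 0 := ne_of_gt hs
  have hA : (Real.sqrt (2 * Real.pi) : ℂ) ≠ 0 := by
    simp [Real.sqrt_eq_zero', Real.pi_pos, Real.pi_pos.not_ge, not_le.2 Real.pi_pos]
  have hlog : Complex.log (-s) = Complex.log s - Real.pi * Complex.I := by
    apply Complex.ext
    · simp [Complex.log_re]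
    · simp [Complex.log_im, Complex.arg_neg_eq_arg_sub_pi_of_im_pos hs]
  have h1 : s ^ (s - 1/2 : ℂ) = Complex.exp (Complex.log s * (s - 1/2)) :=
    Complex.cpow_def_of_ne_zero hs0 _
  have h2 : (-s) ^ (-s - 1/2 : ℂ) = Complex.exp ((Complex.log s - Real.pi * Complex.I) * (-s - 1/2)) := by
    rw [Complex.cpow_def_of_ne_zero (neg_ne_zero.2 hs0), hlog]
  have hGs : Complex.Gamma s ≠ 0 := by
    apply Complex.Gamma_ne_zero
    intro m h; rw [h] at hsim; simp at hsim
  have hG1s : Complex.Gamma (1 - s) ≠ 0 := by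
    apply Complex.Gamma_ne_zero
    intro m h
    have := congrArg Complex.im h
    simp at this; exact hsim this
  have hGneg : Complex.Gamma (-s) = Complex.Gamma (1 - s) / (-s) := by
    have h := Complex.Gamma_add_one (-s) (neg_ne_zero.2 hs0)
    rw [show (-s + 1 : ℂ) = 1 - s by ring] at h
    rw [h]; field_simp
  have hsin : Complex.sin (Real.pi * s) ≠ 0 := by
    rw [Complex.sin_ne_zero_iff]
    intro k h
    have := congrArg Complex.im h
    simp at this
    exact hsim this
  have hrefl : Complex.Gamma s * Complex.Gamma (1 - s) * Complex.sin (Real.pi * s) = Real.pi := by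
    rw [Complex.Gamma_mul_Gamma_one_sub]; field_simp
  have hexplog : Complex.exp (Complex.log s) = s := Complex.exp_log hs0
  have hsin_exp : Complex.sin (Real.pi * s) =
      (Complex.exp (-((Real.pi:ℂ) * s) * Complex.I) - Complex.exp ((Real.pi:ℂ) * s * Complex.I)) * Complex.I / 2 :=
    rfl
  have hI : Complex.exp ((Real.pi : ℂ)/2 * Complex.I) = Complex.I := by
    rw [Complex.exp_mul_I]
    have c : Complex.cos ((Real.pi : ℂ)/2) = 0 := by
      rw [show ((Real.pi : ℂ)/2) = ((Real.pi/2 : ℝ) : ℂ) by push_cast; ring, ← Complex.ofReal_cos]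
      simp
    have s' : Complex.sin ((Real.pi : ℂ)/2) = 1 := by
      rw [show ((Real.pi : ℂ)/2) = ((Real.pi/2 : ℝ) : ℂ) by push_cast; ring, ← Complex.ofReal_sin]
      simp
    rw [c, s']; ring
  set a := Complex.exp ((Real.pi:ℂ) * s * Complex.I) with ha
  have e1 : Complex.exp (-((Real.pi:ℂ) * s) * Complex.I) * a = 1 := by
    rw [ha, ← Complex.exp_add,
      show (-((Real.pi:ℂ)*s)*Complex.I + (Real.pi:ℂ)*s*Complex.I) = 0 by ring, Complex.exp_zero]
  have e2 : Complex.exp ((Real.pi:ℂ) * s * Complex.I) * a = Complex.exp (2*(Real.pi:ℂ)*Complex.I*s) := by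
    rw [ha, ← Complex.exp_add]; congr 1; ring
  have hfactor : 1 - Complex.exp (2*(Real.pi:ℂ)*Complex.I*s) =
      Complex.sin ((Real.pi:ℂ)*s) * (-2*Complex.I) * a := by
    rw [hsin_exp]
    linear_combination -e1 + e2 +
      (Complex.exp (-((Real.pi:ℂ) * s) * Complex.I) - Complex.exp ((Real.pi:ℂ) * s * Complex.I)) * a * Complex.I_mul_I
  have i2' : Complex.exp (Complex.log s * (s * 2 - 1) / 2) *
      Complex.exp ((Complex.log s - (Real.pi:ℂ) * Complex.I) * (-(s * 2) - 1) / 2) *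
      Complex.exp (Complex.log s) = a * Complex.I := by
    rw [← Complex.exp_add, ← Complex.exp_add,
      show Complex.log s * (s * 2 - 1) / 2 + (Complex.log s - (Real.pi:ℂ) * Complex.I) * (-(s * 2) - 1) / 2 + Complex.log s
        = (Real.pi:ℂ) * s * Complex.I + (Real.pi:ℂ)/2 * Complex.I by ring,
      Complex.exp_add, hI, ha]
  rw [hexplog] at i2'
  have i1 : Complex.exp (-s) * Complex.exp s = 1 := by
    rw [← Complex.exp_add]; simp
  have hq : ((Real.sqrt 2 : ℝ) : ℂ) * ((Real.sqrt Real.pi : ℝ) : ℂ) *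
      (((Real.sqrt 2 : ℝ) : ℂ) * ((Real.sqrt Real.pi : ℝ) : ℂ)) = 2 * (Real.pi:ℂ) := by
    have h : (Real.sqrt 2 * Real.sqrt Real.pi * (Real.sqrt 2 * Real.sqrt Real.pi) : ℝ)
        = 2 * Real.pi := by
      rw [show (Real.sqrt 2 * Real.sqrt Real.pi * (Real.sqrt 2 * Real.sqrt Real.pi) : ℝ)
        = (Real.sqrt 2 * Real.sqrt 2) * (Real.sqrt Real.pi * Real.sqrt Real.pi) by ring,
        Real.mul_self_sqrt (by norm_num), Real.mul_self_sqrt Real.pi_pos.le]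
    exact_mod_cast congrArg (Complex.ofReal) h
  unfold GammaStar
  rw [h1, h2, hGneg]
  field_simp
  have hc2 : ((Real.sqrt (2 * Real.pi) : ℝ) : ℂ) ^ 2 = 2 * (Real.pi:ℂ) := by
    rw [← Complex.ofReal_pow, Real.sq_sqrt (by positivity)]; push_cast; ring
  rw [show s * 2 * (Real.pi:ℂ) * Complex.I = 2 * (Real.pi:ℂ) * Complex.I * s by ring]
  linear_combination -(Complex.Gamma s * Complex.Gamma (1 - s)) * hfactor + (2 * Complex.I * a) * hrefl -
    ((Complex.exp (Complex.log s * (s * 2 - 1) / 2) * Complex.exp ((Complex.log s - (Real.pi:ℂ) * Complex.I) * (-(s * 2) - 1) / 2) * s *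
      (Complex.exp (-s) * Complex.exp s)) * hc2 +
     2 * (Real.pi:ℂ) * (Complex.exp (-s) * Complex.exp s) * i2' + 2 * (Real.pi:ℂ) * a * Complex.I * i1)

/-- for `Im s > 0`,
`Σ_{k≥0} e^{2πiks}/Γ*(s e^{−πi}) = Γ*(s)`, and equivalently
`1/((1 − e^{2πis}) Γ*(s e^{−πi})) = Γ*(s)`. -/
theorem tsum_reciprocal_gammaStar (s : ℂ) (hs : 0 < s.im) :
    (∑' k : ℕ, Complex.exp (2 * (Real.pi : ℂ) * Complex.I * (k : ℂ) * s) /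
        GammaStar (s * Complex.exp (-((Real.pi : ℂ) * Complex.I)))) = GammaStar s ∧
    1 / ((1 - Complex.exp (2 * (Real.pi : ℂ) * Complex.I * s)) *
        GammaStar (s * Complex.exp (-((Real.pi : ℂ) * Complex.I)))) = GammaStar s := by
  have hK := key s hs
  have hms : s * Complex.exp (-((Real.pi:ℂ) * Complex.I)) = -s := by
    rw [Complex.exp_neg, Complex.exp_pi_mul_I, inv_neg, inv_one, mul_neg, mul_one]
  have hX : (1 - Complex.exp (2 * (Real.pi : ℂ) * Complex.I * s)) * GammaStar (-s) ≠ 0 :=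
    right_ne_zero_of_mul (by rw [hK]; exact one_ne_zero)
  have hG : GammaStar s =
      ((1 - Complex.exp (2 * (Real.pi : ℂ) * Complex.I * s)) * GammaStar (-s))⁻¹ :=
    eq_inv_of_mul_eq_one_left hK
  have hnorm : ‖Complex.exp (2*(Real.pi:ℂ)*Complex.I*s)‖ < 1 := by
    rw [Complex.norm_exp]
    apply Real.exp_lt_one_iff.mpr
    have : (2*(Real.pi:ℂ)*Complex.I*s).re = -(2*Real.pi*s.im) := by
      simp [Complex.mul_re, Complex.mul_im]
    rw [this]
    have := Real.pi_pos
    nlinarith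
  constructor
  · have hterm : ∀ k : ℕ, Complex.exp (2 * (Real.pi : ℂ) * Complex.I * (k : ℂ) * s) =
        Complex.exp (2*(Real.pi:ℂ)*Complex.I*s) ^ k := fun k => by
      rw [← Complex.exp_nat_mul]; congr 1; ring
    rw [hms]
    calc (∑' k : ℕ, Complex.exp (2 * (Real.pi : ℂ) * Complex.I * (k : ℂ) * s) / GammaStar (-s))
        = (∑' k : ℕ, Complex.exp (2*(Real.pi:ℂ)*Complex.I*s) ^ k * (GammaStar (-s))⁻¹) := by
          apply tsum_congr; intro k; rw [hterm, div_eq_mul_inv]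
      _ = (1 - Complex.exp (2*(Real.pi:ℂ)*Complex.I*s))⁻¹ * (GammaStar (-s))⁻¹ := by
          rw [tsum_mul_right, tsum_geometric_of_norm_lt_one hnorm]
      _ = GammaStar s := by rw [hG, mul_inv]
  · rw [hms, one_div, ← hG]
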